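/- Let F : ℝ^d × ℝ → ℝ^d be C^3 with F_x invertible in a neighborhood of (x₀,λ₀), and suppose y(h) is a path with F(y(h), λ₀+h) = h² c + O(h³) for some c ∈ ℝ^d and y(h) = x₀ + O(h). Then the Newton update vector n(h) := -F_x(y(h),λ₀+h)⁻¹ F(y(h),λ₀+h) satisfies n(h) = -h² F_x(x₀,λ₀)⁻¹ c + O(h³), and if c ≠ 0 then ‖n(h)‖ = δ₂ h² + O(h³) with δ₂ = ‖F_x(x₀,λ₀)⁻¹ c‖ > 0. -/

import Mathlib

set_option maxHeartbeats 1000000 in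
/-- **Expansion of the first Newton update (indicator `δ`).** If `F` is `C³` with `F_x`
invertible near `(x₀,l₀)`, and `y(h)` is a prediction path with `y(h) = x₀ + O(h)` and
residual `F(y(h), l₀+h) = h² c + O(h³)`, then the Newton update
`n(h) = -F_x(y(h),l₀+h)⁻¹ F(y(h),l₀+h)` satisfies `n(h) = -h² F_x(x₀,l₀)⁻¹ c + O(h³)`;
if moreover `c ≠ 0` then `‖n(h)‖ = δ₂ h² + O(h³)` with `δ₂ = ‖F_x(x₀,l₀)⁻¹ c‖ > 0`. -/
theorem stmt17 {d : ℕ} (F : EuclideanSpace ℝ (Fin d) → ℝ → EuclideanSpace ℝ (Fin d))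
    (hF : ContDiff ℝ 3 (fun p : EuclideanSpace ℝ (Fin d) × ℝ => F p.1 p.2))
    (x₀ : EuclideanSpace ℝ (Fin d)) (l₀ : ℝ) (c : EuclideanSpace ℝ (Fin d))
    (hinv : ∃ U ∈ nhds ((x₀, l₀) : EuclideanSpace ℝ (Fin d) × ℝ), ∀ p ∈ U,
      IsUnit (fderiv ℝ (fun z => F z p.2) p.1))
    (y : ℝ → EuclideanSpace ℝ (Fin d))
    (hy : ∃ C₁ > (0:ℝ), ∃ h₁ > (0:ℝ), ∀ h : ℝ, |h| ≤ h₁ → ‖y h - x₀‖ ≤ C₁ * |h|)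
    (hres : ∃ C₂ > (0:ℝ), ∃ h₂ > (0:ℝ), ∀ h : ℝ, |h| ≤ h₂ →
      ‖F (y h) (l₀ + h) - h ^ 2 • c‖ ≤ C₂ * |h| ^ 3) :
    (∃ C₃ > (0:ℝ), ∃ h₃ > (0:ℝ), ∀ h : ℝ, |h| ≤ h₃ →
      ‖-(Ring.inverse (fderiv ℝ (fun z => F z (l₀ + h)) (y h))) (F (y h) (l₀ + h)) +
        h ^ 2 • (Ring.inverse (fderiv ℝ (fun z => F z l₀) x₀)) c‖ ≤ C₃ * |h| ^ 3) ∧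
    (c ≠ 0 →
      0 < ‖(Ring.inverse (fderiv ℝ (fun z => F z l₀) x₀)) c‖ ∧
      ∃ C₄ > (0:ℝ), ∃ h₄ > (0:ℝ), ∀ h : ℝ, |h| ≤ h₄ →
        |‖-(Ring.inverse (fderiv ℝ (fun z => F z (l₀ + h)) (y h))) (F (y h) (l₀ + h))‖ -
          ‖(Ring.inverse (fderiv ℝ (fun z => F z l₀) x₀)) c‖ * h ^ 2| ≤ C₄ * |h| ^ 3) := by
  classical
  obtain ⟨U, hU, hUinv⟩ := hinv
  obtain ⟨C₁, hC₁, h₁, hh₁, hy⟩ := hy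
  obtain ⟨C₂, hC₂, h₂, hh₂, hres⟩ := hres
  set Fp : EuclideanSpace ℝ (Fin d) × ℝ → EuclideanSpace ℝ (Fin d) :=
    fun p => F p.1 p.2 with hFpdef
  -- partial derivative as composition of full derivative with `inl`
  have hkey : ∀ (x : EuclideanSpace ℝ (Fin d)) (l : ℝ),
      fderiv ℝ (fun z => F z l) x
        = (fderiv ℝ Fp (x, l)).comp (ContinuousLinearMap.inl ℝ _ ℝ) := by
    intro x l
    have hd : HasFDerivAt Fp (fderiv ℝ Fp (x, l)) (x, l) :=
      ((hF.differentiable (by norm_num)).differentiableAt).hasFDerivAt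
    exact (hd.comp x (hasFDerivAt_prodMk_left (𝕜 := ℝ) x l)).fderiv
  set G : EuclideanSpace ℝ (Fin d) × ℝ →
      (EuclideanSpace ℝ (Fin d) →L[ℝ] EuclideanSpace ℝ (Fin d)) :=
    fun p => (fderiv ℝ Fp p).comp (ContinuousLinearMap.inl ℝ _ ℝ) with hGdef
  have hGc : ContDiff ℝ 1 G :=
    ContDiff.clm_comp (hF.fderiv_right (m := 1) (by norm_num)) contDiff_const
  have hup : ((x₀, l₀) : EuclideanSpace ℝ (Fin d) × ℝ) ∈ U := mem_of_mem_nhds hU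
  have hu : IsUnit (G (x₀, l₀)) := by
    have := hUinv _ hup
    rwa [hkey] at this
  set Inv : EuclideanSpace ℝ (Fin d) × ℝ →
      (EuclideanSpace ℝ (Fin d) →L[ℝ] EuclideanSpace ℝ (Fin d)) :=
    fun p => Ring.inverse (G p) with hInvdef
  have hInvC : ContDiffAt ℝ 1 Inv (x₀, l₀) := by
    have h1 : ContDiffAt ℝ 1
        (Ring.inverse : (EuclideanSpace ℝ (Fin d) →L[ℝ] EuclideanSpace ℝ (Fin d)) → _)
        (G (x₀, l₀)) := by
      have := contDiffAt_ringInverse ℝ (n := 1) hu.unit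
      rwa [hu.unit_spec] at this
    exact h1.comp _ hGc.contDiffAt
  obtain ⟨K, t, ht, hlip⟩ := hInvC.exists_lipschitzOnWith
  obtain ⟨ε, hε, hball⟩ := Metric.mem_nhds_iff.mp ht
  -- rewrite the statement's `Ring.inverse (fderiv ...)` via `Inv`
  have hA : ∀ h : ℝ, Ring.inverse (fderiv ℝ (fun z => F z (l₀ + h)) (y h))
      = Inv (y h, l₀ + h) := by
    intro h; rw [hInvdef]; simp only [hGdef, hkey]
  have hA0 : Ring.inverse (fderiv ℝ (fun z => F z l₀) x₀) = Inv (x₀, l₀) := by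
    rw [hInvdef]; simp only [hGdef, hkey]
  set h₃ : ℝ := min h₁ (min h₂ (ε / (2 * (C₁ + 1)))) with hh₃def
  have hh₃ : 0 < h₃ := by
    apply lt_min hh₁ (lt_min hh₂ _); positivity
  set M : ℝ := ‖Inv (x₀, l₀)‖ + K * (C₁ + 1) * h₃ with hMdef
  set C₃ : ℝ := M * C₂ + K * (C₁ + 1) * ‖c‖ + 1 with hC₃def
  have hM0 : 0 ≤ M := by positivity
  have hC₃ : 0 < C₃ := by positivity
  have main : ∀ h : ℝ, |h| ≤ h₃ →
      ‖-(Ring.inverse (fderiv ℝ (fun z => F z (l₀ + h)) (y h))) (F (y h) (l₀ + h)) +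
        h ^ 2 • (Ring.inverse (fderiv ℝ (fun z => F z l₀) x₀)) c‖ ≤ C₃ * |h| ^ 3 := by
    intro h hh
    have hh1 : |h| ≤ h₁ := le_trans hh (min_le_left _ _)
    have hh2 : |h| ≤ h₂ := le_trans hh (le_trans (min_le_right _ _) (min_le_left _ _))
    have hhe : |h| ≤ ε / (2 * (C₁ + 1)) :=
      le_trans hh (le_trans (min_le_right _ _) (min_le_right _ _))
    have hdist : dist ((y h, l₀ + h) : EuclideanSpace ℝ (Fin d) × ℝ) (x₀, l₀)
        ≤ (C₁ + 1) * |h| := by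
      rw [Prod.dist_eq]
      apply max_le
      · rw [dist_eq_norm]
        have := hy h hh1
        nlinarith [abs_nonneg h]
      · rw [Real.dist_eq, add_sub_cancel_left]
        nlinarith [abs_nonneg h]
    have hmem : ((y h, l₀ + h) : EuclideanSpace ℝ (Fin d) × ℝ) ∈ Metric.ball (x₀, l₀) ε := by
      rw [Metric.mem_ball]
      have h2' : |h| * (2 * (C₁ + 1)) ≤ ε := by
        rw [le_div_iff₀ (by positivity)] at hhe
        exact hhe
      nlinarith [abs_nonneg h]
    have hmem0 : ((x₀, l₀) : EuclideanSpace ℝ (Fin d) × ℝ) ∈ Metric.ball (x₀, l₀) ε :=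
      Metric.mem_ball_self hε
    have hlipb : ‖Inv (y h, l₀ + h) - Inv (x₀, l₀)‖ ≤ K * ((C₁ + 1) * |h|) := by
      have := hlip.dist_le_mul _ (hball hmem) _ (hball hmem0)
      rw [dist_eq_norm] at this
      refine le_trans this ?_
      exact mul_le_mul_of_nonneg_left hdist K.coe_nonneg
    have hAb : ‖Inv (y h, l₀ + h)‖ ≤ M := by
      have h1 : ‖Inv (y h, l₀ + h)‖
          ≤ ‖Inv (x₀, l₀)‖ + ‖Inv (y h, l₀ + h) - Inv (x₀, l₀)‖ := by
        exact norm_le_norm_add_norm_sub' _ _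
      have h2 : (K : ℝ) * ((C₁ + 1) * |h|) ≤ K * (C₁ + 1) * h₃ := by
        have : (0:ℝ) ≤ (K : ℝ) * (C₁ + 1) := by positivity
        nlinarith
      rw [hMdef]; linarith
    rw [hA, hA0]
    set A := Inv (y h, l₀ + h)
    set A₀ := Inv (x₀, l₀)
    set r := F (y h) (l₀ + h)
    have key : -A r + h ^ 2 • A₀ c
        = -(A (r - h ^ 2 • c)) - (A - A₀) (h ^ 2 • c) := by
      simp only [map_sub, map_smul, ContinuousLinearMap.sub_apply]
      module
    rw [key]
    have b1 : ‖A (r - h ^ 2 • c)‖ ≤ M * (C₂ * |h| ^ 3) := by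
      refine le_trans (A.le_opNorm _) ?_
      exact mul_le_mul hAb (hres h hh2) (norm_nonneg _) hM0
    have b2 : ‖(A - A₀) (h ^ 2 • c)‖ ≤ K * ((C₁ + 1) * |h|) * (h ^ 2 * ‖c‖) := by
      refine le_trans ((A - A₀).le_opNorm _) ?_
      rw [norm_smul, Real.norm_eq_abs, abs_of_nonneg (sq_nonneg h)]
      exact mul_le_mul hlipb le_rfl (by positivity) (by positivity)
    have habs : h ^ 2 = |h| ^ 2 := (sq_abs h).symm
    refine le_trans (norm_sub_le _ _) ?_
    rw [norm_neg]
    have : (K:ℝ) * ((C₁ + 1) * |h|) * (h ^ 2 * ‖c‖)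
        = K * (C₁ + 1) * ‖c‖ * |h| ^ 3 := by
      rw [habs]; ring
    rw [this] at b2
    have hC3exp : C₃ * |h| ^ 3 = M * (C₂ * |h| ^ 3) + K * (C₁ + 1) * ‖c‖ * |h| ^ 3
        + |h| ^ 3 := by rw [hC₃def]; ring
    rw [hC3exp]
    have : (0:ℝ) ≤ |h| ^ 3 := by positivity
    linarith
  refine ⟨⟨C₃, hC₃, h₃, hh₃, main⟩, ?_⟩
  intro hc
  have hcc : G (x₀, l₀) (Inv (x₀, l₀) c) = c := by
    rw [hInvdef, ← ContinuousLinearMap.mul_apply, Ring.mul_inverse_cancel _ hu,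
      ContinuousLinearMap.one_apply]
  have hpos : 0 < ‖(Ring.inverse (fderiv ℝ (fun z => F z l₀) x₀)) c‖ := by
    rw [hA0]
    have hne : Inv (x₀, l₀) c ≠ 0 := by
      intro h0
      apply hc
      rw [← hcc, h0, map_zero]
    exact norm_pos_iff.mpr hne
  refine ⟨hpos, C₃, hC₃, h₃, hh₃, fun h hh => ?_⟩
  have hmain := main h hh
  have : ‖(Ring.inverse (fderiv ℝ (fun z => F z l₀) x₀)) c‖ * h ^ 2
      = ‖-(h ^ 2 • (Ring.inverse (fderiv ℝ (fun z => F z l₀) x₀)) c)‖ := by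
    rw [norm_neg, norm_smul, Real.norm_eq_abs, abs_of_nonneg (sq_nonneg h), mul_comm]
  rw [this]
  refine le_trans (abs_norm_sub_norm_le _ _) ?_
  rw [sub_neg_eq_add]
  exact hmain
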